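/- Let P be a finite locally Eulerian poset and let Q be the poset obtained from Int(P) (intervals of P ordered by inclusion) by adjoining a minimum element 0̂. Then Q is lower Eulerian: every interval of Q is graded and μ_Q(x,y) = (-1)^{ρ(x,y)} for all x ≤ y in Q. -/

import Mathlib

open Finset

/-- The Möbius function of a finite partial order, valued in `ℤ`. -/
noncomputable def pmu (α : Type*) [PartialOrder α] [Finite α] : α → α → ℤ :=
  letI := Fintype.ofFinite α
  letI := Classical.decEq α
  letI : @DecidableRel α α (· ≤ ·) := Classical.decRel _
  letI : @DecidableRel α α (· < ·) := Classical.decRel _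
  letI := Fintype.toLocallyFiniteOrder (α := α)
  fun x y => IncidenceAlgebra.mu ℤ x y

variable {α : Type*} [PartialOrder α]

/-- `c` is a maximal chain of the subposet `S`. -/
def IsMaxChainIn (S : Set α) (c : Finset α) : Prop :=
  ↑c ⊆ S ∧ IsChain (· ≤ ·) (c : Set α) ∧
    ∀ c' : Finset α, ↑c' ⊆ S → IsChain (· ≤ ·) (c' : Set α) → c ⊆ c' → c = c'

/-- The interval `[x,y]` is graded of rank `r`: every maximal chain of it has `r+1` elements. -/
def IntervalGraded (x y : α) (r : ℕ) : Prop :=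
  ∀ c : Finset α, IsMaxChainIn (Set.Icc x y) c → c.card = r + 1

/-- The subposet `S` is graded of rank `d`: every maximal chain of `S` has `d+1` elements. -/
def GradedRank (S : Set α) (d : ℕ) : Prop :=
  ∀ c : Finset α, IsMaxChainIn S c → c.card = d + 1

/-- A finite poset is lower Eulerian with rank function `ρ` on intervals: every interval
`[x,y]` is graded of rank `ρ x y` with `μ(x,y) = (-1)^{ρ x y}` (a minimum element is
required separately, via `OrderBot`). -/
def LowerEulerianWith (α : Type*) [PartialOrder α] [Finite α] (ρ : α → α → ℕ) : Prop :=
  ∀ x y : α, x ≤ y → IntervalGraded x y (ρ x y) ∧ pmu α x y = (-1) ^ ρ x y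

instance (α : Type*) [Fintype α] : Fintype (WithTop α) := instFintypeOption
instance (α : Type*) [Fintype α] : Fintype (WithBot α) := instFintypeOption

instance (α : Type*) [Finite α] : Finite (WithTop α) :=
  letI := Fintype.ofFinite α; @Finite.of_fintype (WithTop α) (instFintypeOption (α := α))
instance (α : Type*) [Finite α] : Finite (WithBot α) :=
  letI := Fintype.ofFinite α; @Finite.of_fintype (WithBot α) (instFintypeOption (α := α))

/-- The poset of nonempty closed intervals `[x, y]` of `α`, ordered by inclusion. -/
def Intvl (α : Type*) [Preorder α] : Type _ := {p : α × α // p.1 ≤ p.2}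

namespace Intvl

variable {α : Type*} [PartialOrder α]

instance : PartialOrder (Intvl α) where
  le i j := j.1.1 ≤ i.1.1 ∧ i.1.2 ≤ j.1.2
  le_refl i := ⟨le_refl _, le_refl _⟩
  le_trans i j l h1 h2 := ⟨le_trans h2.1 h1.1, le_trans h1.2 h2.2⟩
  le_antisymm i j h1 h2 := Subtype.ext (Prod.ext (le_antisymm h2.1 h1.1) (le_antisymm h1.2 h2.2))

instance [Finite α] : Finite (Intvl α) := Subtype.finite

end Intvl

/- auxiliary lemmas -/
section Chains
variable {β : Type*} [Fintype β] [PartialOrder β] [DecidableEq β]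

set_option linter.unusedSectionVars false

lemma exists_maxChainIn (S : Set β) : ∃ c, IsMaxChainIn S c := by
  obtain ⟨c, hc, hmax⟩ := Set.Finite.exists_maximalFor (fun c : Finset β => c.card)
    {c : Finset β | ↑c ⊆ S ∧ IsChain (· ≤ ·) (c : Set β)} (Set.toFinite _)
    ⟨∅, by simp, by simp⟩
  exact ⟨c, hc.1, hc.2, fun c' hs hch hsub =>
    Finset.eq_of_subset_of_card_le hsub
      (hmax ⟨hs, hch⟩ (Finset.card_le_card hsub))⟩

lemma maxChainIn_Icc_mem {x y : β} (h : x ≤ y) {c : Finset β}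
    (hc : IsMaxChainIn (Set.Icc x y) c) : x ∈ c ∧ y ∈ c := by
  obtain ⟨hsub, hch, hmax⟩ := hc
  constructor
  · by_contra hx
    have hch' : IsChain (· ≤ ·) ((insert x c : Finset β) : Set β) := by
      rw [Finset.coe_insert]
      exact hch.insert fun b hb _ => Or.inl (hsub hb).1
    have := hmax (insert x c)
      (by rw [Finset.coe_insert]; exact Set.insert_subset ⟨le_rfl, h⟩ hsub)
      hch' (Finset.subset_insert _ _)
    exact hx (this ▸ Finset.mem_insert_self x c)
  · by_contra hy
    have hch' : IsChain (· ≤ ·) ((insert y c : Finset β) : Set β) := by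
      rw [Finset.coe_insert]
      exact hch.insert fun b hb _ => Or.inr (hsub hb).2
    have := hmax (insert y c)
      (by rw [Finset.coe_insert]; exact Set.insert_subset ⟨h, le_rfl⟩ hsub)
      hch' (Finset.subset_insert _ _)
    exact hy (this ▸ Finset.mem_insert_self y c)

lemma maxChain_card_aux (x0 y : β) (r : β → ℤ)
    (hcov : ∀ u v : β, x0 ≤ u → u < v → v ≤ y →
      (∀ w, u < w → w < v → False) → r v = r u + 1) :
    ∀ n : ℕ, ∀ x (c : Finset β), c.card = n → x0 ≤ x → x ≤ y →
      IsMaxChainIn (Set.Icc x y) c → (c.card : ℤ) = r y - r x + 1 := by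
  intro n
  induction n using Nat.strong_induction_on with
  | _ n ih =>
  intro x c hcard hx0 hxy hc
  obtain ⟨hxc, hyc⟩ := maxChainIn_Icc_mem hxy hc
  obtain ⟨hsub, hch, hmax⟩ := hc
  rcases eq_or_lt_of_le hxy with rfl | hlt
  · have hcx : c = {x} := by
      apply Finset.Subset.antisymm
      · intro z hz
        have := hsub hz
        simp only [Set.Icc_self, Set.mem_singleton_iff] at this
        simp [this]
      · simpa using hxc
    simp [hcx]
  · set c₁ := c.erase x with hc₁
    have hyc₁ : y ∈ c₁ := Finset.mem_erase.2 ⟨hlt.ne', hyc⟩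
    obtain ⟨m, hm, hmmin⟩ : ∃ m ∈ c₁, ∀ z ∈ c₁, ¬ z < m := by
      obtain ⟨m, hm, h⟩ := Finset.exists_minimal ⟨y, hyc₁⟩
      exact ⟨m, hm, fun z hz hlt => hlt.not_ge (h hz hlt.le)⟩
    have hmc : m ∈ c := Finset.mem_of_mem_erase hm
    have hmx : m ≠ x := (Finset.mem_erase.1 hm).1
    have hmle : ∀ z ∈ c₁, m ≤ z := by
      intro z hz
      rcases eq_or_ne z m with rfl | hne
      · exact le_rfl
      · rcases hch (Finset.mem_coe.2 (Finset.mem_of_mem_erase hz))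
          (Finset.mem_coe.2 hmc) hne with h | h
        · exact absurd (lt_of_le_of_ne h hne) (hmmin z hz)
        · exact h
    have hxm : x < m := lt_of_le_of_ne (hsub hmc).1 (Ne.symm hmx)
    have hcovxm : ∀ w, x < w → w < m → False := by
      intro w hxw hwm
      have hwc : w ∉ c := by
        intro hwc
        rcases eq_or_ne w x with rfl | hne
        · exact lt_irrefl _ hxw
        · exact absurd (hmle w (Finset.mem_erase.2 ⟨hne, hwc⟩)) (not_le_of_gt hwm)
      have hch' : IsChain (· ≤ ·) ((insert w c : Finset β) : Set β) := by
        rw [Finset.coe_insert]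
        refine hch.insert fun b hb _ => ?_
        rcases eq_or_ne b x with rfl | hne
        · exact Or.inr hxw.le
        · exact Or.inl (hwm.le.trans (hmle b (Finset.mem_erase.2 ⟨hne, hb⟩)))
      have := hmax (insert w c)
        (by rw [Finset.coe_insert]
            exact Set.insert_subset ⟨hxw.le, hwm.le.trans (hsub hmc).2⟩ hsub)
        hch' (Finset.subset_insert _ _)
      exact hwc (this ▸ Finset.mem_insert_self w c)
    have hrm : r m = r x + 1 := hcov x m hx0 hxm (hsub hmc).2 hcovxm
    have hc₁max : IsMaxChainIn (Set.Icc m y) c₁ := by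
      refine ⟨?_, hch.mono (by simp [hc₁, Finset.erase_subset]), ?_⟩
      · intro z hz
        have hz' := Finset.mem_coe.1 hz
        exact ⟨hmle z hz', (hsub (Finset.mem_coe.2 (Finset.mem_of_mem_erase hz'))).2⟩
      · intro c' hs' hch' hsub'
        have hxc' : x ∉ c' := fun hx' => absurd (hs' (Finset.mem_coe.2 hx')).1
          (not_le_of_gt hxm)
        have hch'' : IsChain (· ≤ ·) ((insert x c' : Finset β) : Set β) := by
          rw [Finset.coe_insert]
          exact hch'.insert fun b hb _ => Or.inl (hxm.le.trans (hs' hb).1)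
        have hceq : c = insert x c' := by
          apply hmax
          · rw [Finset.coe_insert]
            exact Set.insert_subset ⟨le_rfl, hxy⟩
              (fun z hz => ⟨hxm.le.trans (hs' hz).1, (hs' hz).2⟩)
          · exact hch''
          · intro z hz
            rcases eq_or_ne z x with rfl | hne
            · exact Finset.mem_insert_self _ _
            · exact Finset.mem_insert_of_mem (hsub' (Finset.mem_erase.2 ⟨hne, hz⟩))
        apply Finset.Subset.antisymm hsub'
        intro z hz
        have hzc : z ∈ c := hceq ▸ Finset.mem_insert_of_mem hz
        refine Finset.mem_erase.2 ⟨?_, hzc⟩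
        rintro rfl
        exact hxc' hz
    have hcard₁ : c₁.card = c.card - 1 := Finset.card_erase_of_mem hxc
    have hcardlt : c₁.card < n := by
      rw [hcard₁, ← hcard]
      have : 0 < c.card := Finset.card_pos.2 ⟨x, hxc⟩
      omega
    have := ih c₁.card hcardlt m c₁ rfl (hx0.trans hxm.le) (hsub hmc).2 hc₁max
    have hcpos : 0 < c.card := Finset.card_pos.2 ⟨x, hxc⟩
    have : (c.card : ℤ) = (c₁.card : ℤ) + 1 := by rw [hcard₁]; push_cast [hcpos]; omega
    omega

lemma intervalGraded_of_rank {x y : β} (hxy : x ≤ y) (r : β → ℤ) (n : ℕ)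
    (hcov : ∀ u v : β, x ≤ u → u < v → v ≤ y →
      (∀ w, u < w → w < v → False) → r v = r u + 1)
    (hn : r y - r x = n) : IntervalGraded x y n := by
  intro c hc
  have := maxChain_card_aux x y r hcov c.card x c rfl le_rfl hxy hc
  rw [hn] at this
  exact_mod_cast this

end Chains

/- ---------- auxiliary lemmas (pmu) ---------- -/
section PmuLemmas
variable {β : Type*} [PartialOrder β] [Fintype β] [DecidableEq β]
  [@DecidableRel β β (· ≤ ·)] [LocallyFiniteOrder β]

set_option linter.unusedSectionVars false

lemma pmu_eq (x y : β) : pmu β x y = IncidenceAlgebra.mu ℤ x y := by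
  unfold pmu
  congr! 1
  congr 1 <;> first | rfl | exact Subsingleton.elim _ _

lemma pmu_self' (x : β) : pmu β x x = 1 := by
  rw [pmu_eq]; exact IncidenceAlgebra.mu_self x

lemma pmu_sum_right' (x y : β) :
    ∑ z ∈ Finset.Icc x y, pmu β x z = if x = y then 1 else 0 := by
  simp_rw [pmu_eq]; exact IncidenceAlgebra.sum_Icc_mu_right x y

lemma pmu_sum_left' (x y : β) :
    ∑ z ∈ Finset.Icc x y, pmu β z y = if x = y then 1 else 0 := by
  simp_rw [pmu_eq]; exact IncidenceAlgebra.sum_Icc_mu_left x y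

lemma pmu_unique (f : β → β → ℤ) (h1 : ∀ x, f x x = 1)
    (h2 : ∀ x y, x ≤ y → x ≠ y → ∑ z ∈ Finset.Icc x y, f x z = 0) :
    ∀ x y : β, x ≤ y → f x y = pmu β x y := by
  have key : ∀ n (x y : β), (Finset.Icc x y).card = n → x ≤ y → f x y = pmu β x y := by
    intro n
    induction n using Nat.strong_induction_on with
    | _ n ih =>
    intro x y hn hxy
    rcases eq_or_ne x y with rfl | hne
    · rw [h1, pmu_self']
    · have hf := h2 x y hxy hne
      rw [Finset.Icc_eq_cons_Ico hxy, Finset.sum_cons] at hf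
      have hmu : pmu β x y = -∑ z ∈ Finset.Ico x y, pmu β x z := by
        rw [pmu_eq, IncidenceAlgebra.mu_eq_neg_sum_Ico_of_ne hne]
        simp_rw [pmu_eq]
      have hcg : ∀ z ∈ Finset.Ico x y, f x z = pmu β x z := by
        intro z hz
        obtain ⟨hxz, hzy⟩ := Finset.mem_Ico.1 hz
        exact ih (Finset.Icc x z).card
          (by rw [← hn]
              exact Finset.card_lt_card (Finset.Icc_ssubset_Icc_right hxy le_rfl hzy))
          x z rfl hxz
      rw [hmu, ← Finset.sum_congr rfl hcg]
      linarith
  intro x y hxy; exact key _ x y rfl hxy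

end PmuLemmas

lemma Intvl.le_def' {i j : Intvl α} : i ≤ j ↔ j.1.1 ≤ i.1.1 ∧ i.1.2 ≤ j.1.2 := Iff.rfl

def Intvl.mk' {α : Type*} [Preorder α] (p : α × α) (h : p.1 ≤ p.2) : Intvl α := ⟨p, h⟩

/-- If `P` is a finite locally Eulerian poset, then the poset obtained from
`Int(P)` by adjoining a minimum element is lower Eulerian. -/
theorem stmt3 (α : Type*) [PartialOrder α] [Fintype α]
    (ρ : α → α → ℕ)
    (hLE : ∀ x y : α, x ≤ y → IntervalGraded x y (ρ x y) ∧ pmu α x y = (-1) ^ ρ x y) :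
    ∃ ρ' : WithBot (Intvl α) → WithBot (Intvl α) → ℕ,
      LowerEulerianWith (WithBot (Intvl α)) ρ' := by
  classical
  letI : LocallyFiniteOrder α := Fintype.toLocallyFiniteOrder
  letI : Fintype (Intvl α) := Fintype.ofFinite _
  letI : LocallyFiniteOrder (WithBot (Intvl α)) := Fintype.toLocallyFiniteOrder
  -- basic facts about ρ
  have hρ0 : ∀ x : α, ρ x x = 0 := by
    intro x
    have h1 : IsMaxChainIn (Set.Icc x x) ({x} : Finset α) := by
      refine ⟨by simp, by simp, fun c' hs hch hsub => ?_⟩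
      apply Finset.Subset.antisymm hsub
      intro z hz
      have := hs hz
      simp only [Set.Icc_self, Set.mem_singleton_iff] at this
      simp [this]
    have := (hLE x x le_rfl).1 _ h1
    simpa using this.symm
  have hρ_add : ∀ a x d : α, a ≤ x → x ≤ d → ρ a d = ρ a x + ρ x d := by
    intro a x d hax hxd
    obtain ⟨c1, hc1⟩ := exists_maxChainIn (Set.Icc a x)
    obtain ⟨c2, hc2⟩ := exists_maxChainIn (Set.Icc x d)
    have hx1 := maxChainIn_Icc_mem hax hc1
    have hx2 := maxChainIn_Icc_mem hxd hc2
    have hunion : IsMaxChainIn (Set.Icc a d) (c1 ∪ c2) := by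
      refine ⟨?_, ?_, ?_⟩
      · intro z hz
        rw [Finset.coe_union] at hz
        rcases hz with hz | hz
        · exact ⟨(hc1.1 hz).1, (hc1.1 hz).2.trans hxd⟩
        · exact ⟨hax.trans (hc2.1 hz).1, (hc2.1 hz).2⟩
      · intro u hu v hv huv
        rw [Finset.coe_union] at hu hv
        rcases hu with hu | hu <;> rcases hv with hv | hv
        · exact hc1.2.1 hu hv huv
        · exact Or.inl ((hc1.1 hu).2.trans (hc2.1 hv).1)
        · exact Or.inr ((hc1.1 hv).2.trans (hc2.1 hu).1)
        · exact hc2.2.1 hu hv huv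
      · intro c' hs hch hsub
        have hxc' : x ∈ c' := hsub (Finset.mem_union_left _ hx1.2)
        have h1 : c1 = c'.filter (· ≤ x) := by
          apply hc1.2.2
          · intro z hz
            simp only [Finset.coe_filter, Set.mem_setOf_eq] at hz
            exact ⟨(hs (Finset.mem_coe.2 hz.1)).1, hz.2⟩
          · exact hch.mono (by intro z hz; simp only [Finset.coe_filter,
              Set.mem_setOf_eq] at hz; exact hz.1)
          · intro z hz
            exact Finset.mem_filter.2 ⟨hsub (Finset.mem_union_left _ hz), (hc1.1 hz).2⟩
        have h2 : c2 = c'.filter (x ≤ ·) := by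
          apply hc2.2.2
          · intro z hz
            simp only [Finset.coe_filter, Set.mem_setOf_eq] at hz
            exact ⟨hz.2, (hs (Finset.mem_coe.2 hz.1)).2⟩
          · exact hch.mono (by intro z hz; simp only [Finset.coe_filter,
              Set.mem_setOf_eq] at hz; exact hz.1)
          · intro z hz
            exact Finset.mem_filter.2 ⟨hsub (Finset.mem_union_right _ hz), (hc2.1 hz).1⟩
        apply Finset.Subset.antisymm hsub
        intro z hz
        rcases eq_or_ne z x with rfl | hne
        · exact Finset.mem_union_left _ hx1.2
        · rcases hch (Finset.mem_coe.2 hz) (Finset.mem_coe.2 hxc') hne with h | h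
          · exact Finset.mem_union_left _ (h1 ▸ Finset.mem_filter.2 ⟨hz, h⟩)
          · exact Finset.mem_union_right _ (h2 ▸ Finset.mem_filter.2 ⟨hz, h⟩)
    have e1 : c1.card = ρ a x + 1 := (hLE a x hax).1 _ hc1
    have e2 : c2.card = ρ x d + 1 := (hLE x d hxd).1 _ hc2
    have e3 : (c1 ∪ c2).card = ρ a d + 1 := (hLE a d (hax.trans hxd)).1 _ hunion
    have hint : c1 ∩ c2 = {x} := by
      apply Finset.Subset.antisymm
      · intro z hz
        rw [Finset.mem_inter] at hz
        have h1 := hc1.1 (Finset.mem_coe.2 hz.1)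
        have h2 := hc2.1 (Finset.mem_coe.2 hz.2)
        simp [le_antisymm h1.2 h2.1]
      · intro z hz
        rw [Finset.mem_singleton] at hz
        subst hz
        exact Finset.mem_inter.2 ⟨hx1.2, hx2.1⟩
    have := Finset.card_union_add_card_inter c1 c2
    rw [hint, e1, e2, e3, Finset.card_singleton] at this
    omega
  have hρ_cov : ∀ x y : α, x < y → (∀ w, x < w → w < y → False) → ρ x y = 1 := by
    intro x y hxy hmid
    have h1 : IsMaxChainIn (Set.Icc x y) ({x, y} : Finset α) := by
      refine ⟨?_, ?_, fun c' hs hch hsub => ?_⟩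
      · intro z hz
        simp only [Finset.coe_insert, Finset.coe_singleton, Set.mem_insert_iff,
          Set.mem_singleton_iff] at hz
        rcases hz with rfl | rfl
        · exact ⟨le_rfl, hxy.le⟩
        · exact ⟨hxy.le, le_rfl⟩
      · simp only [Finset.coe_insert, Finset.coe_singleton]
        exact IsChain.insert IsChain.singleton fun b hb _ => by
          rw [Set.mem_singleton_iff] at hb; subst hb; exact Or.inl hxy.le
      · apply Finset.Subset.antisymm hsub
        intro z hz
        have hz' := hs (Finset.mem_coe.2 hz)
        rcases eq_or_ne z x with rfl | hnzx
        · simp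
        · rcases eq_or_ne z y with rfl | hnzy
          · simp
          · exact absurd (hmid z (lt_of_le_of_ne hz'.1 (Ne.symm hnzx))
              (lt_of_le_of_ne hz'.2 hnzy)) (fun h => h)
    have := (hLE x y hxy.le).1 _ h1
    rw [Finset.card_insert_of_notMem (by simp [hxy.ne]), Finset.card_singleton] at this
    omega
  -- cover characterization in Intvl
  have hcovInt : ∀ i j : Intvl α, i ≤ j → i ≠ j →
      (∀ w : Intvl α, i < w → w < j → False) →
      ρ j.1.1 i.1.1 + ρ i.1.2 j.1.2 = 1 := by
    rintro ⟨⟨b, c⟩, hbc⟩ ⟨⟨a, d⟩, had⟩ hle hne hmid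
    obtain ⟨hab, hcd⟩ := hle
    simp only at hab hcd hbc had ⊢
    have hosub : ¬(a = b ∧ c = d) := by
      rintro ⟨rfl, rfl⟩; exact hne rfl
    by_cases h1 : a = b
    · subst h1
      have hcd' : c < d := lt_of_le_of_ne hcd (by rintro rfl; exact hne rfl)
      have : ρ c d = 1 := by
        apply hρ_cov c d hcd'
        intro w hcw hwd
        refine hmid ⟨(a, w), hbc.trans hcw.le⟩ ?_ ?_
        · refine lt_of_le_of_ne ⟨le_rfl, hcw.le⟩ ?_
          intro h
          have := congrArg (fun z => z.1.2) h
          simp only at this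
          exact hcw.ne this
        · refine lt_of_le_of_ne ⟨le_rfl, hwd.le⟩ ?_
          intro h
          have := congrArg (fun z => z.1.2) h
          simp only at this
          exact hwd.ne this
      rw [hρ0, this]
    · have hab' : a < b := lt_of_le_of_ne hab h1
      by_cases h2 : c = d
      · subst h2
        have : ρ a b = 1 := by
          apply hρ_cov a b hab'
          intro w haw hwb
          refine hmid ⟨(w, c), hwb.le.trans hbc⟩ ?_ ?_
          · refine lt_of_le_of_ne ⟨hwb.le, le_rfl⟩ ?_
            intro h
            have := congrArg (fun z => z.1.1) h
            simp only at this
            exact hwb.ne this.symm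
          · refine lt_of_le_of_ne ⟨haw.le, le_rfl⟩ ?_
            intro h
            have := congrArg (fun z => z.1.1) h
            simp only at this
            exact haw.ne this.symm
        rw [hρ0, this]
      · exfalso
        have hcd' : c < d := lt_of_le_of_ne hcd h2
        refine hmid ⟨(b, d), hbc.trans hcd⟩ ?_ ?_
        · refine lt_of_le_of_ne ⟨le_rfl, hcd⟩ ?_
          intro h
          have := congrArg (fun z => z.1.2) h
          simp only at this
          exact h2 this
        · refine lt_of_le_of_ne ⟨hab, le_rfl⟩ ?_
          intro h
          have := congrArg (fun z => z.1.1) h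
          simp only at this
          exact h1 this.symm

  -- the rank function on WithBot (Intvl α)
  let rho' : WithBot (Intvl α) → WithBot (Intvl α) → ℕ := fun X Y =>
    WithBot.recBotCoe (WithBot.recBotCoe 0 (fun j => ρ j.1.1 j.1.2 + 1) Y)
      (fun i => WithBot.recBotCoe 0 (fun j => ρ j.1.1 i.1.1 + ρ i.1.2 j.1.2) Y) X
  let emb : α × α → WithBot (Intvl α) := fun p =>
    if h : p.1 ≤ p.2 then (WithBot.some (α := Intvl α) (Intvl.mk' p h)) else ⊥
  have hembeq : ∀ (p : α × α) (h : p.1 ≤ p.2),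
      emb p = (WithBot.some (α := Intvl α) (Intvl.mk' p h)) := fun p h => dif_pos h
  -- Möbius values
  have hmu : ∀ X Y : WithBot (Intvl α), X ≤ Y →
      ((-1 : ℤ)) ^ (rho' X Y) = pmu (WithBot (Intvl α)) X Y := by
    apply pmu_unique
    · intro X
      induction X using WithBot.recBotCoe with
      | bot => rfl
      | coe i =>
        show ((-1 : ℤ)) ^ (ρ i.1.1 i.1.1 + ρ i.1.2 i.1.2) = 1
        rw [hρ0, hρ0]
        rfl
    · intro X Y hXY hne
      induction Y using WithBot.recBotCoe with
      | bot => exact absurd (le_bot_iff.1 hXY) hne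
      | coe j =>
        induction X using WithBot.recBotCoe with
        | bot =>
          obtain ⟨⟨a, d⟩, had⟩ := j
          have had' : a ≤ d := had
          set T := (Finset.Icc a d ×ˢ Finset.Icc a d).filter (fun p => p.1 ≤ p.2) with hT
          have hbot : (⊥ : WithBot (Intvl α)) ∈
              Finset.Icc (⊥ : WithBot (Intvl α)) (WithBot.some (α := Intvl α) ⟨(a, d), had⟩) :=
            Finset.mem_Icc.2 ⟨le_rfl, bot_le⟩
          have himB : (Finset.Icc (⊥ : WithBot (Intvl α))
              (WithBot.some (α := Intvl α) ⟨(a, d), had⟩)).erase ⊥ = T.image emb := by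
            ext Z
            simp only [Finset.mem_erase, Finset.mem_Icc, Finset.mem_image, hT,
              Finset.mem_filter, Finset.mem_product]
            constructor
            · rintro ⟨hZb, -, hZj⟩
              obtain ⟨k, rfl⟩ := WithBot.ne_bot_iff_exists.1 hZb
              replace hZj := WithBot.coe_le_coe.1 hZj
              obtain ⟨h1, h2⟩ := hZj
              refine ⟨(k.1.1, k.1.2), ⟨⟨⟨h1, k.2.trans h2⟩, ⟨h1.trans k.2, h2⟩⟩, k.2⟩, ?_⟩
              rw [hembeq _ k.2]
              rfl
            · rintro ⟨⟨u, v⟩, ⟨⟨⟨hau, hud⟩, hav, hvd⟩, huv⟩, rfl⟩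
              rw [hembeq _ huv]
              refine ⟨WithBot.coe_ne_bot, bot_le, ?_⟩
              refine WithBot.coe_le_coe.2 ?_
              exact ⟨hau, hvd⟩
          have hinjB : ∀ p ∈ T, ∀ q ∈ T, emb p = emb q → p = q := by
            intro p hp q hq h
            rw [hT, Finset.mem_filter] at hp hq
            rw [hembeq _ hp.2, hembeq _ hq.2] at h
            exact Subtype.ext_iff.1 (WithBot.coe_inj.1 h)
          rw [← Finset.add_sum_erase _ _ hbot, himB, Finset.sum_image hinjB]
          have hsummand : ∀ p ∈ T,
              ((-1 : ℤ)) ^ (rho' ⊥ (emb p)) = -(pmu α p.1 p.2) := by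
            intro p hp
            rw [hT, Finset.mem_filter] at hp
            rw [hembeq _ hp.2]
            have hr : rho' ⊥ (WithBot.some (α := Intvl α) (Intvl.mk' p hp.2)) = ρ p.1 p.2 + 1 := rfl
            rw [hr, pow_succ, (hLE p.1 p.2 hp.2).2]
            ring
          rw [Finset.sum_congr rfl hsummand]
          have h0 : rho' ⊥ (⊥ : WithBot (Intvl α)) = 0 := rfl
          rw [h0, pow_zero, hT, Finset.sum_filter, Finset.sum_product]
          have hinner : ∀ u ∈ Finset.Icc a d,
              (∑ v ∈ Finset.Icc a d, if u ≤ v then -(pmu α u v) else 0) =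
                -(if u = d then (1 : ℤ) else 0) := by
            intro u hu
            obtain ⟨hau, hud⟩ := Finset.mem_Icc.1 hu
            rw [← Finset.sum_filter]
            have hfil : (Finset.Icc a d).filter (fun v => u ≤ v) = Finset.Icc u d := by
              ext v
              simp only [Finset.mem_filter, Finset.mem_Icc]
              constructor
              · rintro ⟨⟨_, h2⟩, h3⟩; exact ⟨h3, h2⟩
              · rintro ⟨h1, h2⟩; exact ⟨⟨hau.trans h1, h2⟩, h1⟩
            rw [hfil, Finset.sum_neg_distrib, pmu_sum_right']
          rw [Finset.sum_congr rfl hinner, Finset.sum_neg_distrib]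
          have hlast : ∑ u ∈ Finset.Icc a d, (if u = d then (1 : ℤ) else 0) = 1 := by
            rw [Finset.sum_ite_eq' (Finset.Icc a d) d (fun _ => (1 : ℤ))]
            simp [had']
          rw [hlast]
          ring
        | coe i =>
          obtain ⟨⟨b, c⟩, hbc⟩ := i
          obtain ⟨⟨a, d⟩, had⟩ := j
          have hbc' : b ≤ c := hbc
          replace hXY := WithBot.coe_le_coe.1 hXY
          obtain ⟨hab, hcd⟩ := hXY
          simp only at hab hcd
          have hnabcd : ¬(a = b ∧ c = d) := by
            rintro ⟨rfl, rfl⟩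
            exact hne rfl
          have hIm : Finset.Icc (WithBot.some (α := Intvl α) ⟨(b, c), hbc⟩)
              (WithBot.some (α := Intvl α) ⟨(a, d), had⟩) =
              ((Finset.Icc a b) ×ˢ (Finset.Icc c d)).image emb := by
            ext Z
            simp only [Finset.mem_Icc, Finset.mem_image, Finset.mem_product]
            constructor
            · rintro ⟨hiZ, hZj⟩
              have hZne : Z ≠ ⊥ := by
                rintro rfl
                exact WithBot.not_coe_le_bot _ hiZ
              obtain ⟨k, rfl⟩ := WithBot.ne_bot_iff_exists.1 hZne
              replace hiZ := WithBot.coe_le_coe.1 hiZ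
              replace hZj := WithBot.coe_le_coe.1 hZj
              refine ⟨(k.1.1, k.1.2), ⟨⟨hZj.1, hiZ.1⟩, ⟨hiZ.2, hZj.2⟩⟩, ?_⟩
              rw [hembeq _ k.2]
              rfl
            · rintro ⟨⟨u, v⟩, ⟨⟨hau, hub⟩, hcv, hvd⟩, rfl⟩
              have huv : u ≤ v := hub.trans (hbc'.trans hcv)
              rw [hembeq _ huv]
              constructor
              · exact WithBot.coe_le_coe.2 ⟨hub, hcv⟩
              · exact WithBot.coe_le_coe.2 ⟨hau, hvd⟩
          have hinj : ∀ p ∈ (Finset.Icc a b) ×ˢ (Finset.Icc c d),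
              ∀ q ∈ (Finset.Icc a b) ×ˢ (Finset.Icc c d), emb p = emb q → p = q := by
            intro p hp q hq h
            rw [Finset.mem_product] at hp hq
            have hp2 : p.1 ≤ p.2 := (Finset.mem_Icc.1 hp.1).2.trans
              (hbc'.trans (Finset.mem_Icc.1 hp.2).1)
            have hq2 : q.1 ≤ q.2 := (Finset.mem_Icc.1 hq.1).2.trans
              (hbc'.trans (Finset.mem_Icc.1 hq.2).1)
            rw [hembeq _ hp2, hembeq _ hq2] at h
            exact Subtype.ext_iff.1 (WithBot.coe_inj.1 h)
          rw [hIm, Finset.sum_image hinj]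
          have hsummand : ∀ p ∈ (Finset.Icc a b) ×ˢ (Finset.Icc c d),
              ((-1 : ℤ)) ^ (rho' (WithBot.some (α := Intvl α) ⟨(b, c), hbc⟩) (emb p)) =
                (pmu α p.1 b) * (pmu α c p.2) := by
            intro p hp
            rw [Finset.mem_product] at hp
            obtain ⟨hp1, hp2⟩ := hp
            rw [Finset.mem_Icc] at hp1 hp2
            have hpv : p.1 ≤ p.2 := hp1.2.trans (hbc'.trans hp2.1)
            rw [hembeq _ hpv]
            have hr : rho' (WithBot.some (α := Intvl α) ⟨(b, c), hbc⟩) (WithBot.some (α := Intvl α) (Intvl.mk' p hpv)) =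
                ρ p.1 b + ρ c p.2 := rfl
            rw [hr, pow_add, (hLE p.1 b hp1.2).2, (hLE c p.2 hp2.1).2]
          rw [Finset.sum_congr rfl hsummand, Finset.sum_product]
          have hms : ∑ u ∈ Finset.Icc a b, ∑ v ∈ Finset.Icc c d, pmu α u b * pmu α c v =
              (∑ u ∈ Finset.Icc a b, pmu α u b) * (∑ v ∈ Finset.Icc c d, pmu α c v) := by
            rw [Finset.sum_mul_sum]
          rw [hms, pmu_sum_left', pmu_sum_right']
          rcases not_and_or.1 hnabcd with h | h
          · rw [if_neg h, zero_mul]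
          · rw [if_neg h, mul_zero]
  -- assemble
  refine ⟨rho', ?_⟩
  intro X Y hXY
  refine ⟨?_, (hmu X Y hXY).symm⟩
  induction Y using WithBot.recBotCoe with
  | bot =>
    have hX : X = ⊥ := le_bot_iff.1 hXY
    subst hX
    refine intervalGraded_of_rank le_rfl (fun _ => (0 : ℤ)) _ ?_ ?_
    · intro u v _ huv hv _
      exact absurd (lt_of_lt_of_le huv hv) (not_lt_bot)
    · show (0 : ℤ) - 0 = ((rho' ⊥ ⊥ : ℕ) : ℤ)
      norm_num
      rfl
  | coe j =>
    induction X using WithBot.recBotCoe with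
    | bot =>
      obtain ⟨⟨a, d⟩, had⟩ := j
      refine intervalGraded_of_rank bot_le
        (fun Z => WithBot.recBotCoe (0 : ℤ) (fun k => (ρ k.1.1 k.1.2 : ℤ) + 1) Z) _ ?_ ?_
      · intro u v _ huv hv hmid
        induction v using WithBot.recBotCoe with
        | bot => exact absurd huv not_lt_bot
        | coe k =>
          induction u using WithBot.recBotCoe with
          | bot =>
            have hk : k.1.1 = k.1.2 := by
              by_contra hk
              refine hmid (WithBot.some (α := Intvl α) (Intvl.mk' (k.1.1, k.1.1) le_rfl))
                (WithBot.bot_lt_coe _) ?_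
              rw [WithBot.coe_lt_coe]
              refine lt_of_le_of_ne ⟨le_rfl, k.2⟩ ?_
              intro h
              exact hk (congrArg (fun z : Intvl α => z.1.2) h)
            show (ρ k.1.1 k.1.2 : ℤ) + 1 = 0 + 1
            rw [← hk, hρ0]
            norm_num
          | coe k' =>
            rw [WithBot.coe_lt_coe] at huv
            replace hv := WithBot.coe_le_coe.1 hv
            have hmid' : ∀ w : Intvl α, k' < w → w < k → False := fun w h1 h2 =>
              hmid ↑w (WithBot.coe_lt_coe.2 h1) (WithBot.coe_lt_coe.2 h2)
            have hc := hcovInt k' k huv.le huv.ne hmid'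
            show (ρ k.1.1 k.1.2 : ℤ) + 1 = ((ρ k'.1.1 k'.1.2 : ℤ) + 1) + 1
            have h1 : ρ k.1.1 k.1.2 = ρ k.1.1 k'.1.1 + ρ k'.1.1 k.1.2 :=
              hρ_add _ _ _ huv.le.1 (k'.2.trans huv.le.2)
            have h2 : ρ k'.1.1 k.1.2 = ρ k'.1.1 k'.1.2 + ρ k'.1.2 k.1.2 :=
              hρ_add _ _ _ k'.2 huv.le.2
            push_cast
            omega
      · show ((ρ a d : ℤ) + 1) - 0 = ((ρ a d + 1 : ℕ) : ℤ)
        push_cast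
        ring
    | coe i =>
      obtain ⟨⟨b, c⟩, hbc⟩ := i
      obtain ⟨⟨a, d⟩, had⟩ := j
      have hbc' : b ≤ c := hbc
      have hXY0 := hXY
      replace hXY := WithBot.coe_le_coe.1 hXY
      obtain ⟨hab, hcd⟩ := hXY
      simp only at hab hcd
      refine intervalGraded_of_rank hXY0
        (fun Z => WithBot.recBotCoe (0 : ℤ)
          (fun k => (ρ k.1.1 b : ℤ) + (ρ c k.1.2 : ℤ)) Z) _ ?_ ?_
      · intro u v hu huv hv hmid
        induction u using WithBot.recBotCoe with
        | bot => exact absurd hu (WithBot.not_coe_le_bot _)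
        | coe k' =>
          induction v using WithBot.recBotCoe with
          | bot => exact absurd huv not_lt_bot
          | coe k =>
            rw [WithBot.coe_lt_coe] at huv
            replace hu := WithBot.coe_le_coe.1 hu
            replace hv := WithBot.coe_le_coe.1 hv
            have hmid' : ∀ w : Intvl α, k' < w → w < k → False := fun w h1 h2 =>
              hmid ↑w (WithBot.coe_lt_coe.2 h1) (WithBot.coe_lt_coe.2 h2)
            have hc := hcovInt k' k huv.le huv.ne hmid'
            show (ρ k.1.1 b : ℤ) + (ρ c k.1.2 : ℤ) =
              ((ρ k'.1.1 b : ℤ) + (ρ c k'.1.2 : ℤ)) + 1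
            have h1 : ρ k.1.1 b = ρ k.1.1 k'.1.1 + ρ k'.1.1 b :=
              hρ_add _ _ _ huv.le.1 hu.1
            have h2 : ρ c k.1.2 = ρ c k'.1.2 + ρ k'.1.2 k.1.2 :=
              hρ_add _ _ _ hu.2 huv.le.2
            push_cast
            omega
      · show ((ρ a b : ℤ) + (ρ c d : ℤ)) - ((ρ b b : ℤ) + (ρ c c : ℤ)) =
          ((ρ a b + ρ c d : ℕ) : ℤ)
        rw [hρ0, hρ0]
        push_cast
        ring
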